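/- Let a: [0,t₀] → ℝ be continuous, let δ ≥ 0, and let h: [0,t₀] → ℂ be a bounded measurable function satisfying |h(t) − 1 + ∫₀ᵗ a(s) h(s) ds| ≤ δ for all t ∈ [0,t₀]. Then |h(t) − exp(−∫₀ᵗ a(s) ds)| ≤ δ · exp(∫₀ᵗ |a(s)| ds) for all t ∈ [0,t₀]. In particular, if a sequence of such functions h_N satisfies the hypothesis with δ = δ_N → 0, then h_N converges uniformly on [0,t₀] to exp(−∫₀ᵗ a(s) ds). -/

import Mathlib

open MeasureTheory Filter intervalIntegral

lemma gronwall_key (t₀ : ℝ) (ht₀ : 0 ≤ t₀) (b : ℝ → ℝ) (hb : Continuous b)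
    (δ : ℝ) (hδ : 0 ≤ δ) (h : ℝ → ℂ) (hmeas : Measurable h)
    (M : ℝ) (hM : ∀ t ∈ Set.Icc (0:ℝ) t₀, ‖h t‖ ≤ M)
    (hyp : ∀ t ∈ Set.Icc (0:ℝ) t₀,
      ‖h t - 1 + ∫ s in (0:ℝ)..t, (b s : ℂ) * h s‖ ≤ δ) :
    ∀ t ∈ Set.Icc (0:ℝ) t₀,
      ‖h t - Complex.exp (-((∫ s in (0:ℝ)..t, b s : ℝ) : ℂ))‖ ≤
        δ * Real.exp (∫ s in (0:ℝ)..t, |b s|) := by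
  set A : ℝ → ℝ := fun t => ∫ s in (0:ℝ)..t, b s with hA_def
  set B : ℝ → ℝ := fun t => ∫ s in (0:ℝ)..t, |b s| with hB_def
  set e : ℝ → ℂ := fun t => Complex.exp (-(A t : ℂ)) with he_def
  set f : ℝ → ℂ := fun t => h t - e t with hf_def
  have hA : ∀ t, HasDerivAt A (b t) t := fun t =>
    (hb.integral_hasStrictDerivAt 0 t).hasDerivAt
  have hB : ∀ t, HasDerivAt B (|b t|) t := fun t =>
    (hb.abs.integral_hasStrictDerivAt 0 t).hasDerivAt
  have hAc : Continuous A := continuous_iff_continuousAt.2 fun t => (hA t).continuousAt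
  have hBc : Continuous B := continuous_iff_continuousAt.2 fun t => (hB t).continuousAt
  have he_c : Continuous e := Complex.continuous_exp.comp (Complex.continuous_ofReal.comp hAc).neg
  have hbe_int : ∀ t : ℝ, IntervalIntegrable (fun s => (b s : ℂ) * e s) volume 0 t :=
    fun t => ((Complex.continuous_ofReal.comp hb).mul he_c).intervalIntegrable 0 t
  have hA0 : A 0 = 0 := intervalIntegral.integral_same
  have hB0 : B 0 = 0 := intervalIntegral.integral_same
  have he0 : e 0 = 1 := by rw [he_def]; simp [hA0]
  have he_int : ∀ t : ℝ, (∫ s in (0:ℝ)..t, (b s : ℂ) * e s) = 1 - e t := by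
    intro t
    have hderiv : ∀ s ∈ Set.uIcc (0:ℝ) t,
        HasDerivAt (fun u => (1:ℂ) - e u) ((b s : ℂ) * e s) s := by
      intro s _
      have h1 : HasDerivAt (fun u : ℝ => -((A u : ℂ))) (-((b s : ℂ))) s :=
        ((hA s).ofReal_comp).neg
      have h2 : HasDerivAt e (Complex.exp (-((A s : ℂ))) * -((b s : ℂ))) s := h1.cexp
      have h3 := h2.const_sub (1:ℂ)
      exact h3.congr_deriv (by simp only [he_def]; ring)
    have := intervalIntegral.integral_eq_sub_of_hasDerivAt hderiv (hbe_int t)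
    rw [this, he0]
    ring
  have Mnonneg : 0 ≤ M := le_trans (norm_nonneg _) (hM 0 ⟨le_refl 0, ht₀⟩)
  obtain ⟨C, hC⟩ := (isCompact_Icc : IsCompact (Set.Icc (0:ℝ) t₀)).exists_bound_of_continuousOn
    hb.continuousOn
  have hbh_int : ∀ t ∈ Set.Icc (0:ℝ) t₀,
      IntervalIntegrable (fun s => (b s : ℂ) * h s) volume 0 t := by
    intro t ht
    rw [intervalIntegrable_iff_integrableOn_Ioc_of_le ht.1]
    refine MeasureTheory.Integrable.mono' (integrable_const (C * M))
      ((Complex.measurable_ofReal.comp hb.measurable).mul hmeas).aestronglyMeasurable ?_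
    refine (ae_restrict_iff' measurableSet_Ioc).2 (Filter.Eventually.of_forall fun s hs => ?_)
    have hs' : s ∈ Set.Icc (0:ℝ) t₀ := ⟨le_of_lt hs.1, hs.2.trans ht.2⟩
    rw [norm_mul, Complex.norm_real]
    exact mul_le_mul (hC s hs') (hM s hs') (norm_nonneg _)
      (le_trans (norm_nonneg _) (hC s hs'))
  have hnorm_e : ∀ t ∈ Set.Icc (0:ℝ) t₀, ‖e t‖ ≤ Real.exp (B t₀) := by
    intro t ht
    have h1 : ‖e t‖ = Real.exp (-A t) := by
      rw [he_def]
      simp [Complex.norm_exp]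
    rw [h1]
    apply Real.exp_le_exp.2
    have h2 : |A t| ≤ B t := intervalIntegral.abs_integral_le_integral_abs ht.1
    have h3 : B t ≤ B t₀ :=
      intervalIntegral.integral_mono_interval le_rfl ht.1 ht.2
        (Filter.Eventually.of_forall fun s => abs_nonneg _)
        (hb.abs.intervalIntegrable 0 t₀)
    have h4 := neg_abs_le (A t)
    linarith
  set K : ℝ := M + Real.exp (B t₀) with hK_def
  have hfK : ∀ t ∈ Set.Icc (0:ℝ) t₀, ‖f t‖ ≤ K := fun t ht =>
    (norm_sub_le _ _).trans (add_le_add (hM t ht) (hnorm_e t ht))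
  have hbf_int : ∀ t ∈ Set.Icc (0:ℝ) t₀,
      IntervalIntegrable (fun s => (b s:ℂ) * f s) volume 0 t := by
    intro t ht
    have heq : (fun s => (b s:ℂ) * f s)
        = fun s => (b s:ℂ) * h s - (b s:ℂ) * e s := by
      funext s; rw [hf_def]; ring
    rw [heq]
    exact (hbh_int t ht).sub (hbe_int t)
  have hbf_norm_int : ∀ t ∈ Set.Icc (0:ℝ) t₀,
      IntervalIntegrable (fun s => |b s| * ‖f s‖) volume 0 t := by
    intro t ht
    have heq : (fun s => |b s| * ‖f s‖) = fun s => ‖(b s:ℂ) * f s‖ := by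
      funext s; rw [norm_mul, Complex.norm_real, Real.norm_eq_abs]
    rw [heq]
    exact (hbf_int t ht).norm
  have hf_ineq : ∀ t ∈ Set.Icc (0:ℝ) t₀,
      ‖f t‖ ≤ δ + ∫ s in (0:ℝ)..t, |b s| * ‖f s‖ := by
    intro t ht
    have hsplit : (∫ s in (0:ℝ)..t, (b s:ℂ) * f s)
        = (∫ s in (0:ℝ)..t, (b s:ℂ) * h s) - ∫ s in (0:ℝ)..t, (b s:ℂ) * e s := by
      rw [← intervalIntegral.integral_sub (hbh_int t ht) (hbe_int t)]
      congr 1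
      funext s
      rw [hf_def]; ring
    have heq : f t = (h t - 1 + ∫ s in (0:ℝ)..t, (b s:ℂ) * h s)
        - ∫ s in (0:ℝ)..t, (b s:ℂ) * f s := by
      rw [hsplit, he_int t, hf_def]
      ring
    rw [heq]
    refine (norm_sub_le _ _).trans (add_le_add (hyp t ht) ?_)
    refine (intervalIntegral.norm_integral_le_integral_norm ht.1).trans_eq ?_
    congr 1
    funext s
    rw [norm_mul, Complex.norm_real, Real.norm_eq_abs]
  have hcont_term : ∀ k : ℕ, Continuous fun s => |b s| * B s ^ k :=
    fun k => hb.abs.mul (hBc.pow k)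
  have hIpow : ∀ (k : ℕ) (t : ℝ),
      (∫ s in (0:ℝ)..t, |b s| * B s ^ k) = B t ^ (k+1) / ((k:ℝ)+1) := by
    intro k t
    have hderiv : ∀ s ∈ Set.uIcc (0:ℝ) t,
        HasDerivAt (fun u => B u ^ (k+1) / ((k:ℝ)+1)) (|b s| * B s ^ k) s := by
      intro s _
      have hk : ((k:ℝ)+1) ≠ 0 := by positivity
      have h1 : HasDerivAt (fun u => B u ^ (k+1)) (((k:ℝ)+1) * B s ^ k * |b s|) s := by
        have := (hasDerivAt_pow (k+1) (B s)).comp s (hB s)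
        simpa [Function.comp_def] using this
      have h2 := h1.div_const ((k:ℝ)+1)
      exact h2.congr_deriv (by rw [mul_assoc, mul_div_cancel_left₀ _ hk, mul_comm])
    have := intervalIntegral.integral_eq_sub_of_hasDerivAt hderiv
      ((hcont_term k).intervalIntegrable 0 t)
    rw [this, hB0]
    simp

  have hScont : ∀ n : ℕ, Continuous fun s =>
      δ * (∑ k ∈ Finset.range n, B s ^ k / (Nat.factorial k))
        + K * (B s ^ n / (Nat.factorial n)) := by
    intro n
    exact (continuous_const.mul (continuous_finset_sum _ fun k _ =>
      (hBc.pow k).div_const _)).add (continuous_const.mul ((hBc.pow n).div_const _))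
  have hmain : ∀ n : ℕ, ∀ t ∈ Set.Icc (0:ℝ) t₀,
      ‖f t‖ ≤ δ * (∑ k ∈ Finset.range n, B t ^ k / (Nat.factorial k))
        + K * (B t ^ n / (Nat.factorial n)) := by
    intro n
    induction n with
    | zero => intro t ht; simpa using hfK t ht
    | succ n ih =>
      intro t ht
      have hstep := hf_ineq t ht
      have hmono : (∫ s in (0:ℝ)..t, |b s| * ‖f s‖)
          ≤ ∫ s in (0:ℝ)..t, |b s| * (δ * (∑ k ∈ Finset.range n, B s ^ k / (Nat.factorial k))
              + K * (B s ^ n / (Nat.factorial n))) := by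
        refine intervalIntegral.integral_mono_on ht.1 (hbf_norm_int t ht)
          ((hb.abs.mul (hScont n)).intervalIntegrable 0 t) fun s hs => ?_
        have hs' : s ∈ Set.Icc (0:ℝ) t₀ := ⟨hs.1, hs.2.trans ht.2⟩
        exact mul_le_mul_of_nonneg_left (ih s hs') (abs_nonneg _)
      have hcalc : (∫ s in (0:ℝ)..t,
            |b s| * (δ * (∑ k ∈ Finset.range n, B s ^ k / (Nat.factorial k))
              + K * (B s ^ n / (Nat.factorial n))))
          = δ * (∑ k ∈ Finset.range n, B t ^ (k+1) / (Nat.factorial (k+1)))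
            + K * (B t ^ (n+1) / (Nat.factorial (n+1))) := by
        have hrw : (fun s => |b s| * (δ * (∑ k ∈ Finset.range n, B s ^ k / (Nat.factorial k))
              + K * (B s ^ n / (Nat.factorial n))))
            = fun s => (∑ k ∈ Finset.range n, (δ / (Nat.factorial k)) * (|b s| * B s ^ k))
              + (K / (Nat.factorial n)) * (|b s| * B s ^ n) := by
          funext s
          rw [mul_add, Finset.mul_sum, Finset.mul_sum]
          congr 1
          · exact Finset.sum_congr rfl fun k _ => by ring
          · ring
        have h1 : IntervalIntegrable (fun s => ∑ k ∈ Finset.range n,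
            (δ / (Nat.factorial k)) * (|b s| * B s ^ k)) volume 0 t :=
          (continuous_finset_sum _ fun k _ =>
            continuous_const.mul (hcont_term k)).intervalIntegrable 0 t
        have h2 : IntervalIntegrable
            (fun s => (K / (Nat.factorial n)) * (|b s| * B s ^ n)) volume 0 t :=
          (continuous_const.mul (hcont_term n)).intervalIntegrable 0 t
        rw [hrw, intervalIntegral.integral_add h1 h2,
          intervalIntegral.integral_finset_sum
            (f := fun k s => (δ / (Nat.factorial k)) * (|b s| * B s ^ k)) (fun k _ =>
            (continuous_const.mul (hcont_term k)).intervalIntegrable 0 t)]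
        simp only [intervalIntegral.integral_const_mul, hIpow]
        rw [Finset.mul_sum]
        congr 1
        · refine Finset.sum_congr rfl fun k _ => ?_
          have hk : (0:ℝ) < Nat.factorial k := by exact_mod_cast Nat.factorial_pos k
          rw [Nat.factorial_succ]
          push_cast
          rw [div_mul_div_comm, mul_comm ((Nat.factorial k : ℝ)) ((k:ℝ)+1), mul_div_assoc]
        · have hk : (0:ℝ) < Nat.factorial n := by exact_mod_cast Nat.factorial_pos n
          rw [Nat.factorial_succ]
          push_cast
          rw [div_mul_div_comm, mul_comm ((Nat.factorial n : ℝ)) ((n:ℝ)+1), mul_div_assoc]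
      have hsum : (∑ k ∈ Finset.range (n+1), B t ^ k / (Nat.factorial k))
          = (∑ k ∈ Finset.range n, B t ^ (k+1) / (Nat.factorial (k+1))) + 1 := by
        rw [Finset.sum_range_succ']
        simp
      rw [hsum, mul_add, mul_one]
      linarith [hmono, hcalc ▸ hmono]
  intro t ht
  have hlim1 : Tendsto (fun n => ∑ k ∈ Finset.range n, B t ^ k / (Nat.factorial k))
      atTop (nhds (Real.exp (B t))) := by
    have h1 := (NormedSpace.expSeries_div_hasSum_exp (B t)).tendsto_sum_nat
    rwa [← Real.exp_eq_exp_ℝ] at h1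
  have hlim2 : Tendsto (fun n => B t ^ n / (Nat.factorial n : ℝ)) atTop (nhds 0) :=
    FloorSemiring.tendsto_pow_div_factorial_atTop (B t)
  have hlim : Tendsto (fun n => δ * (∑ k ∈ Finset.range n, B t ^ k / (Nat.factorial k))
      + K * (B t ^ n / (Nat.factorial n))) atTop (nhds (δ * Real.exp (B t) + K * 0)) :=
    (hlim1.const_mul δ).add (hlim2.const_mul K)
  have hfin : ‖f t‖ ≤ δ * Real.exp (B t) + K * 0 :=
    ge_of_tendsto hlim (Filter.Eventually.of_forall fun n => hmain n t ht)
  simpa using hfin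

/-- Gronwall-type argument for characteristic functions. Let `a : [0,t₀] → ℝ` be
continuous, `δ ≥ 0`, and let `h : [0,t₀] → ℂ` be bounded measurable with
`|h(t) − 1 + ∫₀ᵗ a(s) h(s) ds| ≤ δ` for all `t ∈ [0,t₀]`. Then
`|h(t) − exp(−∫₀ᵗ a(s) ds)| ≤ δ exp(∫₀ᵗ |a(s)| ds)` on `[0,t₀]`. In particular, if a
sequence of such functions `h_N` satisfies the hypothesis with `δ = δ_N → 0`, then `h_N`
converges uniformly on `[0,t₀]` to `exp(−∫₀ᵗ a(s) ds)`. -/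
theorem charFun_gronwall_limit
    (t₀ : ℝ) (ht₀ : 0 ≤ t₀) (a : ℝ → ℝ) (ha : ContinuousOn a (Set.Icc 0 t₀)) :
    (∀ δ : ℝ, 0 ≤ δ → ∀ h : ℝ → ℂ, Measurable h →
      (∃ M : ℝ, ∀ t ∈ Set.Icc (0 : ℝ) t₀, ‖h t‖ ≤ M) →
      (∀ t ∈ Set.Icc (0 : ℝ) t₀,
        ‖h t - 1 + ∫ s in (0 : ℝ)..t, (a s : ℂ) * h s‖ ≤ δ) →
      ∀ t ∈ Set.Icc (0 : ℝ) t₀,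
        ‖h t - Complex.exp (-((∫ s in (0 : ℝ)..t, a s : ℝ) : ℂ))‖ ≤
          δ * Real.exp (∫ s in (0 : ℝ)..t, |a s|)) ∧
    (∀ (hN : ℕ → ℝ → ℂ) (δN : ℕ → ℝ),
      (∀ n, Measurable (hN n)) →
      (∀ n, ∃ M : ℝ, ∀ t ∈ Set.Icc (0 : ℝ) t₀, ‖hN n t‖ ≤ M) →
      (∀ n, 0 ≤ δN n) →
      (∀ n, ∀ t ∈ Set.Icc (0 : ℝ) t₀,
        ‖hN n t - 1 + ∫ s in (0 : ℝ)..t, (a s : ℂ) * hN n s‖ ≤ δN n) →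
      Tendsto δN atTop (nhds 0) →
      TendstoUniformlyOn hN
        (fun t => Complex.exp (-((∫ s in (0 : ℝ)..t, a s : ℝ) : ℂ)))
        atTop (Set.Icc 0 t₀)) := by
  set b : ℝ → ℝ := fun x => a (Set.projIcc 0 t₀ ht₀ x) with hb_def
  have hb : Continuous b := ha.comp_continuous
    (continuous_subtype_val.comp continuous_projIcc) fun x => (Set.projIcc 0 t₀ ht₀ x).2
  have hba : ∀ x ∈ Set.Icc (0:ℝ) t₀, b x = a x := by
    intro x hx
    rw [hb_def]
    simp [Set.projIcc_of_mem ht₀ hx]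
  have hsub : ∀ t ∈ Set.Icc (0:ℝ) t₀, Set.uIcc (0:ℝ) t ⊆ Set.Icc (0:ℝ) t₀ := by
    intro t ht
    rw [Set.uIcc_of_le ht.1]
    exact Set.Icc_subset_Icc le_rfl ht.2
  have hint_a : ∀ t ∈ Set.Icc (0:ℝ) t₀,
      (∫ s in (0:ℝ)..t, a s) = ∫ s in (0:ℝ)..t, b s := fun t ht =>
    intervalIntegral.integral_congr fun s hs => (hba s (hsub t ht hs)).symm
  have hint_abs : ∀ t ∈ Set.Icc (0:ℝ) t₀,
      (∫ s in (0:ℝ)..t, |a s|) = ∫ s in (0:ℝ)..t, |b s| := fun t ht =>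
    intervalIntegral.integral_congr fun s hs => by rw [hba s (hsub t ht hs)]
  have hint_mul : ∀ (h : ℝ → ℂ), ∀ t ∈ Set.Icc (0:ℝ) t₀,
      (∫ s in (0:ℝ)..t, (a s : ℂ) * h s) = ∫ s in (0:ℝ)..t, (b s : ℂ) * h s := fun h t ht =>
    intervalIntegral.integral_congr fun s hs => by rw [hba s (hsub t ht hs)]
  have part1 : ∀ δ : ℝ, 0 ≤ δ → ∀ h : ℝ → ℂ, Measurable h →
      (∃ M : ℝ, ∀ t ∈ Set.Icc (0 : ℝ) t₀, ‖h t‖ ≤ M) →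
      (∀ t ∈ Set.Icc (0 : ℝ) t₀,
        ‖h t - 1 + ∫ s in (0 : ℝ)..t, (a s : ℂ) * h s‖ ≤ δ) →
      ∀ t ∈ Set.Icc (0 : ℝ) t₀,
        ‖h t - Complex.exp (-((∫ s in (0 : ℝ)..t, a s : ℝ) : ℂ))‖ ≤
          δ * Real.exp (∫ s in (0 : ℝ)..t, |a s|) := by
    intro δ hδ h hmeas hMex hyp t ht
    obtain ⟨M, hM⟩ := hMex
    rw [hint_a t ht, hint_abs t ht]
    exact gronwall_key t₀ ht₀ b hb δ hδ h hmeas M hM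
      (fun u hu => by rw [← hint_mul h u hu]; exact hyp u hu) t ht
  refine ⟨part1, ?_⟩
  intro hN δN hmeasN hMN hδN hypN hδlim
  have hbound : ∀ n, ∀ t ∈ Set.Icc (0:ℝ) t₀,
      ‖hN n t - Complex.exp (-((∫ s in (0 : ℝ)..t, a s : ℝ) : ℂ))‖ ≤
        δN n * Real.exp (∫ s in (0 : ℝ)..t, |a s|) := fun n =>
    part1 (δN n) (hδN n) (hN n) (hmeasN n) (hMN n) (hypN n)
  rw [Metric.tendstoUniformlyOn_iff]
  intro ε hε
  set C : ℝ := Real.exp (∫ s in (0:ℝ)..t₀, |a s|) with hC_def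
  have hC0 : (0:ℝ) < C := Real.exp_pos _
  have hexp_le : ∀ t ∈ Set.Icc (0:ℝ) t₀, Real.exp (∫ s in (0:ℝ)..t, |a s|) ≤ C := by
    intro t ht
    apply Real.exp_le_exp.2
    rw [hint_abs t ht, hint_abs t₀ ⟨ht₀, le_refl t₀⟩]
    exact intervalIntegral.integral_mono_interval le_rfl ht.1 ht.2
      (Filter.Eventually.of_forall fun s => abs_nonneg _)
      (hb.abs.intervalIntegrable 0 t₀)
  have hev : ∀ᶠ n in atTop, δN n < ε / C :=
    hδlim.eventually_lt_const (by positivity)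
  filter_upwards [hev] with n hn
  intro t ht
  rw [dist_eq_norm, ← norm_neg]
  have h1 : ‖hN n t - Complex.exp (-((∫ s in (0 : ℝ)..t, a s : ℝ) : ℂ))‖ ≤ δN n * C :=
    (hbound n t ht).trans (mul_le_mul_of_nonneg_left (hexp_le t ht) (hδN n))
  have h2 : δN n * C < ε := (lt_div_iff₀ hC0).mp hn
  calc ‖-(Complex.exp (-((∫ s in (0 : ℝ)..t, a s : ℝ) : ℂ)) - hN n t)‖
      = ‖hN n t - Complex.exp (-((∫ s in (0 : ℝ)..t, a s : ℝ) : ℂ))‖ := by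
        rw [neg_sub]
    _ ≤ δN n * C := h1
    _ < ε := h2
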